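/- Let (Ω, F, P) be a probability space and let (F_t)_{t≥0} and (G_t)_{t≥0} be filtrations with G_t ⊆ F_t ⊆ F for every t. Let X = (X_t)_{t≥0} be an (F_t)-adapted process with every X_t integrable, and let g : [0,∞) × Ω → ℝ be jointly measurable such that g_s is F_s-measurable for each s and ∫₀ᵗ E|g_s| ds < ∞ for every t ≥ 0. Suppose that the process t ↦ X_t − ∫₀ᵗ g_s ds is an (F_t)-martingale. Let h : [0,∞) × Ω → ℝ be jointly measurable such that for each s, h(s,·) is a version of E[g_s | G_s]. Then the process M_t := E[X_t | G_t] − ∫₀ᵗ h(s,·) ds is a (G_t)-martingale; that is, for all 0 ≤ s ≤ t, E[X_t − ∫₀ᵗ h(u,·) du | G_s] = E[X_s | G_s] − ∫₀ˢ h(u,·) du, P-almost surely. -/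

import Mathlib

open MeasureTheory ProbabilityTheory MeasurableSpace Set
open scoped ENNReal NNReal symmDiff

section RectAlgebra

variable {α β : Type*} [MeasurableSpace α] [MeasurableSpace β]

/-- Finite unions of measurable rectangles. -/
def rectUnions (α β : Type*) [MeasurableSpace α] [MeasurableSpace β] : Set (Set (α × β)) :=
  {S | ∃ L : List (Set α × Set β), (∀ p ∈ L, MeasurableSet p.1 ∧ MeasurableSet p.2) ∧
    S = ⋃ p ∈ L, p.1 ×ˢ p.2}

lemma list_biUnion_cons {γ δ : Type*} (p : γ) (L : List γ) (f : γ → Set δ) :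
    ⋃ q ∈ p :: L, f q = f p ∪ ⋃ q ∈ L, f q := by
  simp [List.mem_cons, Set.iUnion_iUnion_eq_or_left]

lemma list_biUnion_append {γ δ : Type*} (L M : List γ) (f : γ → Set δ) :
    ⋃ q ∈ L ++ M, f q = (⋃ q ∈ L, f q) ∪ ⋃ q ∈ M, f q := by
  simp [List.mem_append, Set.iUnion_or, Set.iUnion_union_distrib]

lemma rectUnions_measurableSet {S : Set (α × β)} (hS : S ∈ rectUnions α β) :
    MeasurableSet S := by
  obtain ⟨L, hL, rfl⟩ := hS
  exact MeasurableSet.biUnion (L.finite_toSet.countable)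
    fun p hp => ((hL p hp).1.prod (hL p hp).2)

lemma rectUnions_union {S T : Set (α × β)} (hS : S ∈ rectUnions α β) (hT : T ∈ rectUnions α β) :
    S ∪ T ∈ rectUnions α β := by
  obtain ⟨L, hL, rfl⟩ := hS
  obtain ⟨M, hM, rfl⟩ := hT
  refine ⟨L ++ M, ?_, ?_⟩
  · intro p hp
    rcases List.mem_append.mp hp with h | h
    · exact hL p h
    · exact hM p h
  · rw [list_biUnion_append]

lemma rectUnions_inter_rect {S : Set (α × β)} (hS : S ∈ rectUnions α β) {A : Set α} {B : Set β}
    (hA : MeasurableSet A) (hB : MeasurableSet B) : S ∩ A ×ˢ B ∈ rectUnions α β := by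
  obtain ⟨L, hL, rfl⟩ := hS
  refine ⟨L.map (fun q => (q.1 ∩ A, q.2 ∩ B)), ?_, ?_⟩
  · intro p hp
    rcases List.mem_map.mp hp with ⟨q, hq, rfl⟩
    exact ⟨(hL q hq).1.inter hA, (hL q hq).2.inter hB⟩
  · ext ⟨u, w⟩
    simp only [Set.mem_inter_iff, Set.mem_iUnion, List.mem_map, exists_prop, Set.mem_prod]
    constructor
    · rintro ⟨⟨q, hq, hu, hw⟩, huA, hwB⟩
      exact ⟨(q.1 ∩ A, q.2 ∩ B), ⟨q, hq, rfl⟩, ⟨hu, huA⟩, ⟨hw, hwB⟩⟩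
    · rintro ⟨q', ⟨q, hq, rfl⟩, ⟨hu, huA⟩, ⟨hw, hwB⟩⟩
      exact ⟨⟨q, hq, hu, hw⟩, huA, hwB⟩

lemma rectUnions_compl {S : Set (α × β)} (hS : S ∈ rectUnions α β) :
    Sᶜ ∈ rectUnions α β := by
  obtain ⟨L, hL, rfl⟩ := hS
  induction L with
  | nil =>
      refine ⟨[(Set.univ, Set.univ)], by simp, ?_⟩
      simp
  | cons p L ih =>
      have hL' : ∀ q ∈ L, MeasurableSet q.1 ∧ MeasurableSet q.2 := fun q hq =>
        hL q (List.mem_cons_of_mem _ hq)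
      have hcompl : (⋃ q ∈ L, q.1 ×ˢ q.2)ᶜ ∈ rectUnions α β := ih hL'
      have hp1 : MeasurableSet p.1 := (hL p (List.mem_cons_self)).1
      have hp2 : MeasurableSet p.2 := (hL p (List.mem_cons_self)).2
      rw [list_biUnion_cons, Set.compl_union, Set.inter_comm, Set.compl_prod_eq_union,
        Set.inter_union_distrib_left]
      exact rectUnions_union
        (rectUnions_inter_rect hcompl hp1.compl MeasurableSet.univ)
        (rectUnions_inter_rect hcompl MeasurableSet.univ hp2.compl)

lemma isSetAlgebra_rectUnions : IsSetAlgebra (rectUnions α β) where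
  empty_mem := ⟨[], by simp, by simp⟩
  compl_mem _ hs := rectUnions_compl hs
  union_mem _ _ hs ht := rectUnions_union hs ht

lemma measurableSpace_prod_eq_generateFrom_rectUnions :
    (Prod.instMeasurableSpace : MeasurableSpace (α × β)) = generateFrom (rectUnions α β) := by
  refine le_antisymm ?_ (generateFrom_le fun S hS => rectUnions_measurableSet hS)
  rw [← generateFrom_prod]
  refine generateFrom_mono ?_
  rintro S ⟨A, hA, B, hB, rfl⟩
  exact ⟨[(A, B)], by simpa using ⟨hA, hB⟩, by simp⟩

/-- Products of indicators of measurable sets. -/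
def rectFns (α β : Type*) [MeasurableSpace α] [MeasurableSpace β] : Set ((α × β) → ℝ) :=
  {F | ∃ A B, MeasurableSet A ∧ MeasurableSet B ∧
    F = fun p => A.indicator (fun _ => (1:ℝ)) p.1 * B.indicator (fun _ => (1:ℝ)) p.2}

omit [MeasurableSpace α] [MeasurableSpace β] in
lemma indicator_prod_eq (A : Set α) (B : Set β) :
    Set.indicator (A ×ˢ B) (fun _ => (1:ℝ)) =
      fun p => A.indicator (fun _ => (1:ℝ)) p.1 * B.indicator (fun _ => (1:ℝ)) p.2 := by
  funext ⟨u, w⟩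
  by_cases hu : u ∈ A <;> by_cases hw : w ∈ B <;>
    simp [Set.indicator_apply, Set.mem_prod, hu, hw]

omit [MeasurableSpace α] [MeasurableSpace β] in
lemma indicator_union_eq (X Y : Set (α × β)) :
    Set.indicator (X ∪ Y) (fun _ => (1:ℝ)) =
      Set.indicator X (fun _ => (1:ℝ)) + Set.indicator Y (fun _ => (1:ℝ))
        - Set.indicator (X ∩ Y) (fun _ => (1:ℝ)) := by
  funext z
  by_cases hx : z ∈ X <;> by_cases hy : z ∈ Y <;>
    simp [Set.indicator_apply, hx, hy]

lemma indicator_rectUnions_mem_span {U : Set (α × β)} (hU : U ∈ rectUnions α β) :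
    Set.indicator U (fun _ => (1:ℝ)) ∈ Submodule.span ℝ (rectFns α β) := by
  obtain ⟨L, hL, rfl⟩ := hU
  suffices H : ∀ (n : ℕ) (L : List (Set α × Set β)), L.length ≤ n →
      (∀ p ∈ L, MeasurableSet p.1 ∧ MeasurableSet p.2) →
      Set.indicator (⋃ p ∈ L, p.1 ×ˢ p.2) (fun _ => (1:ℝ)) ∈ Submodule.span ℝ (rectFns α β) by
    exact H L.length L le_rfl hL
  intro n
  induction n with
  | zero =>
      intro L hlen _
      have : L = [] := List.eq_nil_of_length_eq_zero (Nat.le_zero.mp hlen)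
      subst this
      rw [show (⋃ p ∈ ([] : List (Set α × Set β)), p.1 ×ˢ p.2) = (∅ : Set (α × β)) by simp,
        Set.indicator_empty]
      exact zero_mem _
  | succ n ih =>
      intro L hlen hLm
      match L with
      | [] =>
          rw [show (⋃ p ∈ ([] : List (Set α × Set β)), p.1 ×ˢ p.2) = (∅ : Set (α × β)) by simp,
            Set.indicator_empty]
          exact zero_mem _
      | p :: L' =>
          have hp1 : MeasurableSet p.1 := (hLm p (List.mem_cons_self)).1
          have hp2 : MeasurableSet p.2 := (hLm p (List.mem_cons_self)).2
          have hL' : ∀ q ∈ L', MeasurableSet q.1 ∧ MeasurableSet q.2 := fun q hq =>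
            hLm q (List.mem_cons_of_mem _ hq)
          have hlen' : L'.length ≤ n := Nat.succ_le_succ_iff.mp hlen
          have h2 : p.1 ×ˢ p.2 ∩ (⋃ q ∈ L', q.1 ×ˢ q.2) =
              ⋃ q ∈ L'.map (fun q => (q.1 ∩ p.1, q.2 ∩ p.2)), q.1 ×ˢ q.2 := by
            rw [Set.inter_comm]
            ext ⟨u, w⟩
            simp only [Set.mem_inter_iff, Set.mem_iUnion, List.mem_map, exists_prop,
              Set.mem_prod]
            constructor
            · rintro ⟨⟨q, hq, hu, hw⟩, hu2, hw2⟩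
              exact ⟨(q.1 ∩ p.1, q.2 ∩ p.2), ⟨q, hq, rfl⟩, ⟨hu, hu2⟩, ⟨hw, hw2⟩⟩
            · rintro ⟨q', ⟨q, hq, rfl⟩, ⟨hu, hu2⟩, ⟨hw, hw2⟩⟩
              exact ⟨⟨q, hq, hu, hw⟩, hu2, hw2⟩
          have hbase : Set.indicator (p.1 ×ˢ p.2) (fun _ => (1:ℝ))
              ∈ Submodule.span ℝ (rectFns α β) :=
            Submodule.subset_span ⟨p.1, p.2, hp1, hp2, indicator_prod_eq p.1 p.2⟩
          have hY : Set.indicator (⋃ q ∈ L', q.1 ×ˢ q.2) (fun _ => (1:ℝ))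
              ∈ Submodule.span ℝ (rectFns α β) := ih L' hlen' hL'
          have hXY : Set.indicator (p.1 ×ˢ p.2 ∩ ⋃ q ∈ L', q.1 ×ˢ q.2) (fun _ => (1:ℝ))
              ∈ Submodule.span ℝ (rectFns α β) := by
            rw [h2]
            refine ih _ (by simpa using hlen') ?_
            intro q hq
            rcases List.mem_map.mp hq with ⟨q', hq', rfl⟩
            exact ⟨(hL' q' hq').1.inter hp1, (hL' q' hq').2.inter hp2⟩
          rw [list_biUnion_cons, indicator_union_eq]
          exact sub_mem (add_mem hbase hY) hXY

end RectAlgebra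

section Approx

variable {α β : Type*} [MeasurableSpace α] [MeasurableSpace β]

lemma exists_rectFns_approx (ρ : Measure (α × β)) [IsFiniteMeasure ρ]
    {f : α × β → ℝ} (hf : Integrable f ρ) :
    ∀ ε : ℝ, 0 < ε → ∃ R, R ∈ Submodule.span ℝ (rectFns α β) ∧ Integrable R ρ ∧
      eLpNorm (f - R) 1 ρ ≤ ENNReal.ofReal ε := by
  have hdense : ρ.MeasureDense (rectUnions α β) :=
    Measure.MeasureDense.of_generateFrom_isSetAlgebra_finite ρ isSetAlgebra_rectUnions
      measurableSpace_prod_eq_generateFrom_rectUnions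
  revert f
  intro f hf
  refine Integrable.induction
    (P := fun f => ∀ ε : ℝ, 0 < ε → ∃ R, R ∈ Submodule.span ℝ (rectFns α β) ∧ Integrable R ρ ∧
      eLpNorm (f - R) 1 ρ ≤ ENNReal.ofReal ε) ?_ ?_ ?_ ?_ hf
  · -- indicator case
    intro c E hE hρE ε hε
    have hδ : (0:ℝ) < ε / (‖c‖ + 1) := by positivity
    obtain ⟨U, hU, hEU⟩ := hdense.approx E hE hρE.ne (ε / (‖c‖ + 1)) hδ
    have hUmeas : MeasurableSet U := rectUnions_measurableSet hU
    refine ⟨c • Set.indicator U (fun _ => (1:ℝ)),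
      Submodule.smul_mem _ c (indicator_rectUnions_mem_span hU),
      ((integrable_const (1:ℝ)).indicator hUmeas).smul c, ?_⟩
    have hbound : ∀ z, ‖(E.indicator (fun _ => c) - c • U.indicator (fun _ => (1:ℝ))) z‖₊
        ≤ ((symmDiff E U).indicator (fun _ => (‖c‖₊ : ℝ≥0∞))) z := by
      intro z
      by_cases hzE : z ∈ E <;> by_cases hzU : z ∈ U <;>
        simp [Set.indicator_apply, Set.mem_symmDiff, hzE, hzU]
    calc eLpNorm (E.indicator (fun _ => c) - c • U.indicator (fun _ => (1:ℝ))) 1 ρ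
        = ∫⁻ z, ‖(E.indicator (fun _ => c) - c • U.indicator (fun _ => (1:ℝ))) z‖₊ ∂ρ :=
          eLpNorm_one_eq_lintegral_enorm
      _ ≤ ∫⁻ z, ((symmDiff E U).indicator (fun _ => (‖c‖₊ : ℝ≥0∞))) z ∂ρ :=
          lintegral_mono fun z => hbound z
      _ = ‖c‖₊ * ρ (symmDiff E U) := by
          rw [lintegral_indicator ((hE.symmDiff hUmeas))]
          simp [lintegral_const, Measure.restrict_apply_univ, mul_comm]
      _ ≤ ‖c‖₊ * ENNReal.ofReal (ε / (‖c‖ + 1)) := by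
          exact mul_le_mul_right hEU.le _
      _ ≤ ENNReal.ofReal ε := by
          rw [← ENNReal.ofReal_coe_nnreal, ← ENNReal.ofReal_mul (by positivity)]
          refine ENNReal.ofReal_le_ofReal ?_
          rw [coe_nnnorm]
          rw [div_eq_inv_mul, ← mul_assoc]
          calc ‖c‖ * (‖c‖ + 1)⁻¹ * ε ≤ 1 * ε := by
                have h1 : ‖c‖ * (‖c‖ + 1)⁻¹ ≤ 1 := by
                  rw [mul_inv_le_iff₀ (by positivity), one_mul]
                  linarith [norm_nonneg c]
                nlinarith [norm_nonneg c, hε.le]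
            _ = ε := one_mul ε
  · -- add case
    intro f g _ hfi hgi hPf hPg ε hε
    obtain ⟨R1, hR1s, hR1i, hR1⟩ := hPf (ε/2) (by positivity)
    obtain ⟨R2, hR2s, hR2i, hR2⟩ := hPg (ε/2) (by positivity)
    refine ⟨R1 + R2, add_mem hR1s hR2s, hR1i.add hR2i, ?_⟩
    have hrw : f + g - (R1 + R2) = (f - R1) + (g - R2) := by ring
    rw [hrw]
    calc eLpNorm ((f - R1) + (g - R2)) 1 ρ
        ≤ eLpNorm (f - R1) 1 ρ + eLpNorm (g - R2) 1 ρ :=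
          eLpNorm_add_le (hfi.sub hR1i).aestronglyMeasurable
            (hgi.sub hR2i).aestronglyMeasurable le_rfl
      _ ≤ ENNReal.ofReal (ε/2) + ENNReal.ofReal (ε/2) := add_le_add hR1 hR2
      _ = ENNReal.ofReal ε := by
          rw [← ENNReal.ofReal_add (by positivity) (by positivity)]
          norm_num
  · -- closed case
    have hTset : {f : (α × β) →₁[ρ] ℝ |
        ∀ ε : ℝ, 0 < ε → ∃ R, R ∈ Submodule.span ℝ (rectFns α β) ∧ Integrable R ρ ∧
          eLpNorm (⇑f - R) 1 ρ ≤ ENNReal.ofReal ε}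
        = closure {y : (α × β) →₁[ρ] ℝ | ∃ R, R ∈ Submodule.span ℝ (rectFns α β) ∧
            ∃ hR : Integrable R ρ, y = hR.toL1 R} := by
      ext f
      simp only [Set.mem_setOf_eq]
      constructor
      · intro hf
        rw [Metric.mem_closure_iff]
        intro ε hε
        obtain ⟨R, hRs, hRi, hle⟩ := hf (ε/2) (by positivity)
        refine ⟨hRi.toL1 R, ⟨R, hRs, hRi, rfl⟩, ?_⟩
        rw [Lp.dist_def]
        have hcongr : eLpNorm (⇑f - ⇑(hRi.toL1 R)) 1 ρ = eLpNorm (⇑f - R) 1 ρ :=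
          eLpNorm_congr_ae (Filter.EventuallyEq.sub Filter.EventuallyEq.rfl hRi.coeFn_toL1)
        rw [hcongr]
        calc (eLpNorm (⇑f - R) 1 ρ).toReal ≤ (ENNReal.ofReal (ε/2)).toReal :=
              ENNReal.toReal_mono ENNReal.ofReal_ne_top hle
          _ = ε/2 := ENNReal.toReal_ofReal (by positivity)
          _ < ε := by linarith
      · intro hf ε hε
        rw [Metric.mem_closure_iff] at hf
        obtain ⟨y, ⟨R, hRs, hRi, rfl⟩, hdist⟩ := hf ε hε
        refine ⟨R, hRs, hRi, ?_⟩
        have hcongr : eLpNorm (⇑f - R) 1 ρ = eLpNorm (⇑f - ⇑(hRi.toL1 R)) 1 ρ :=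
          (eLpNorm_congr_ae (Filter.EventuallyEq.sub Filter.EventuallyEq.rfl hRi.coeFn_toL1)).symm
        have hne : eLpNorm (⇑f - ⇑(hRi.toL1 R)) 1 ρ ≠ ⊤ := by
          have h1 : eLpNorm (⇑f - ⇑(hRi.toL1 R)) 1 ρ = eLpNorm (⇑(f - hRi.toL1 R)) 1 ρ :=
            eLpNorm_congr_ae (Lp.coeFn_sub f (hRi.toL1 R)).symm
          rw [h1]
          exact (Lp.memLp (f - hRi.toL1 R)).eLpNorm_ne_top
        rw [hcongr, ← ENNReal.ofReal_toReal hne]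
        refine ENNReal.ofReal_le_ofReal ?_
        rw [← Lp.dist_def]
        exact hdist.le
    exact hTset ▸ isClosed_closure
  · -- ae case
    intro f g hfg _ hPf ε hε
    obtain ⟨R, hRs, hRi, hle⟩ := hPf ε hε
    refine ⟨R, hRs, hRi, ?_⟩
    exact le_trans (le_of_eq (eLpNorm_congr_ae
      (Filter.EventuallyEq.sub hfg.symm (Filter.EventuallyEq.rfl (f := R))))) hle

end Approx

section Projection

variable {Ω : Type*} {m : MeasurableSpace Ω} [m0 : MeasurableSpace Ω] {μ : Measure Ω}

/-- The "good" property for approximants: there is an explicit jointly measurable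
sectionwise conditional expectation, whose `u`-integral is `m`-measurable. -/
def GoodApprox {Ω : Type*} (m : MeasurableSpace Ω) [m0 : MeasurableSpace Ω] (μ : Measure Ω)
    (s : ℝ) (R : ℝ × Ω → ℝ) : Prop :=
  (∀ u : ℝ, Integrable (fun ω => R (u, ω)) μ) ∧
  ∃ PR : ℝ → Ω → ℝ, ∃ Φ : Ω → ℝ,
    Measurable (Function.uncurry PR) ∧
    StronglyMeasurable[m] Φ ∧ Integrable Φ μ ∧
    (∀ u, Integrable (PR u) μ) ∧
    (∀ u, PR u =ᵐ[μ] μ[(fun ω => R (u, ω)) | m]) ∧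
    (∀ ω, IntegrableOn (fun u => PR u ω) (Set.Ioc (0:ℝ) s) volume) ∧
    (∀ ω, Φ ω = ∫ u in Set.Ioc (0:ℝ) s, PR u ω)

lemma goodApprox_of_mem_span [IsFiniteMeasure μ] (hm : m ≤ m0) (s : ℝ)
    {R : ℝ × Ω → ℝ} (hR : R ∈ Submodule.span ℝ (rectFns ℝ Ω)) : GoodApprox m μ s R := by
  haveI : IsFiniteMeasure (volume.restrict (Set.Ioc (0:ℝ) s)) :=
    ⟨by rw [Measure.restrict_apply_univ]; exact measure_Ioc_lt_top⟩
  induction hR using Submodule.span_induction with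
  | mem R hRmem =>
      obtain ⟨A, B, hA, hB, rfl⟩ := hRmem
      set κ : Ω → ℝ := μ[B.indicator (fun _ => (1:ℝ)) | m] with hκ
      have hκmeas : Measurable κ := (stronglyMeasurable_condExp.mono hm).measurable
      refine ⟨fun u => ?_, fun u ω => A.indicator (fun _ => (1:ℝ)) u * κ ω,
        fun ω => (∫ u in Set.Ioc (0:ℝ) s, A.indicator (fun _ => (1:ℝ)) u) * κ ω,
        ?_, ?_, ?_, ?_, ?_, ?_, ?_⟩
      · dsimp only
        have hBint : Integrable (B.indicator (fun _ => (1:ℝ))) μ :=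
          (integrable_const (1:ℝ)).indicator hB
        exact hBint.const_mul _
      · exact (((measurable_const.indicator hA).comp measurable_fst).mul
          (hκmeas.comp measurable_snd))
      · exact stronglyMeasurable_condExp.const_mul _
      · exact integrable_condExp.const_mul _
      · exact fun u => integrable_condExp.const_mul _
      · intro u
        dsimp only
        by_cases hu : u ∈ A
        · have h1 : (fun ω => A.indicator (fun _ => (1:ℝ)) u * B.indicator (fun _ => (1:ℝ)) ω)
              = B.indicator (fun _ => (1:ℝ)) := by
            funext ω; rw [Set.indicator_of_mem hu, one_mul]
          have h2 : (fun ω => A.indicator (fun _ => (1:ℝ)) u * κ ω) = κ := by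
            funext ω; rw [Set.indicator_of_mem hu, one_mul]
          rw [h1, h2]
        · have h1 : (fun ω => A.indicator (fun _ => (1:ℝ)) u * B.indicator (fun _ => (1:ℝ)) ω)
              = (0 : Ω → ℝ) := by
            funext ω; rw [Set.indicator_of_notMem hu, zero_mul]; rfl
          have h2 : (fun ω => A.indicator (fun _ => (1:ℝ)) u * κ ω) = (0 : Ω → ℝ) := by
            funext ω; rw [Set.indicator_of_notMem hu, zero_mul]; rfl
          rw [h1, h2, condExp_zero]
      · intro ω
        have hAint : Integrable (A.indicator (fun _ => (1:ℝ)))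
            (volume.restrict (Set.Ioc (0:ℝ) s)) := (integrable_const (1:ℝ)).indicator hA
        exact hAint.mul_const _
      · intro ω
        dsimp only
        rw [integral_mul_const]
  | zero =>
      refine ⟨fun u => by simpa using integrable_const (0:ℝ),
        fun _ _ => 0, fun _ => 0, measurable_const, stronglyMeasurable_const,
        integrable_const 0, fun u => integrable_const 0, fun u => ?_, fun ω => ?_, fun ω => by simp⟩
      · have h0 : (fun ω => (0 : ℝ × Ω → ℝ) (u, ω)) = (0 : Ω → ℝ) := rfl
        rw [h0, condExp_zero]
        exact Filter.Eventually.of_forall fun ω => rfl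
      · simpa using integrableOn_const.mpr (Or.inr measure_Ioc_lt_top)
  | add R1 R2 _ _ ih1 ih2 =>
      obtain ⟨hint1, PR1, Φ1, hmeas1, hsm1, hΦi1, hPRi1, hPRe1, hPRio1, hΦe1⟩ := ih1
      obtain ⟨hint2, PR2, Φ2, hmeas2, hsm2, hΦi2, hPRi2, hPRe2, hPRio2, hΦe2⟩ := ih2
      refine ⟨fun u => by exact (hint1 u).add (hint2 u),
        fun u ω => PR1 u ω + PR2 u ω, fun ω => Φ1 ω + Φ2 ω,
        ?_, hsm1.add hsm2, hΦi1.add hΦi2, fun u => (hPRi1 u).add (hPRi2 u), fun u => ?_,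
        fun ω => (hPRio1 ω).add (hPRio2 ω), fun ω => ?_⟩
      · exact hmeas1.add hmeas2
      · dsimp only
        have h1 : (fun ω => (R1 + R2) (u, ω))
            = (fun ω => R1 (u, ω)) + (fun ω => R2 (u, ω)) := rfl
        rw [h1]
        refine ((hPRe1 u).add (hPRe2 u)).trans ?_
        exact (condExp_add (hint1 u) (hint2 u) m).symm
      · dsimp only
        rw [hΦe1 ω, hΦe2 ω]
        exact (integral_add (hPRio1 ω) (hPRio2 ω)).symm
  | smul c R _ ih =>
      obtain ⟨hint, PR, Φ, hmeas, hsm, hΦi, hPRi, hPRe, hPRio, hΦe⟩ := ih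
      refine ⟨fun u => by simpa using (hint u).const_mul c,
        fun u ω => c * PR u ω, fun ω => c * Φ ω,
        measurable_const.mul hmeas, hsm.const_mul _, hΦi.const_mul _,
        fun u => (hPRi u).const_mul _, fun u => ?_, fun ω => (hPRio ω).const_mul _, fun ω => ?_⟩
      · dsimp only
        have h1 : (fun ω => (c • R) (u, ω)) = c • (fun ω => R (u, ω)) := rfl
        rw [h1]
        refine Filter.EventuallyEq.trans ?_ (condExp_smul c (fun ω => R (u, ω)) m).symm
        filter_upwards [hPRe u] with ω hω
        simp [hω]
      · dsimp only
        rw [hΦe ω]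
        exact (integral_const_mul c _).symm

lemma aestronglyMeasurable'_setIntegral [IsFiniteMeasure μ] (hm : m ≤ m0)
    {s : ℝ} {h : ℝ → Ω → ℝ}
    (hhmeas : Measurable (Function.uncurry h))
    (hint : ∀ u : ℝ, Integrable (h u) μ)
    (hIh : Integrable (Function.uncurry h) ((volume.restrict (Set.Ioc (0:ℝ) s)).prod μ))
    (hfix : ∀ u ∈ Set.Ioc (0:ℝ) s, h u =ᵐ[μ] μ[h u | m]) :
    AEStronglyMeasurable[m] (fun ω => ∫ u in Set.Ioc (0:ℝ) s, h u ω) μ := by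
  haveI : IsFiniteMeasure (volume.restrict (Set.Ioc (0:ℝ) s)) :=
    ⟨by rw [Measure.restrict_apply_univ]; exact measure_Ioc_lt_top⟩
  set ν : Measure ℝ := volume.restrict (Set.Ioc (0:ℝ) s) with hνdef
  set π : Measure (ℝ × Ω) := ν.prod μ with hπdef
  set H : Ω → ℝ := fun ω => ∫ u in Set.Ioc (0:ℝ) s, h u ω with hHdef
  have HInt : Integrable H μ := by
    have := hIh.integral_prod_right
    simpa [Function.uncurry] using this
  have key : ∀ ε : ℝ, 0 < ε →
      eLpNorm (H - μ[H|m]) 1 μ ≤ ENNReal.ofReal ε + ENNReal.ofReal ε := by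
    intro ε hε
    obtain ⟨R, hRspan, hRint, hRapprox⟩ := exists_rectFns_approx π hIh ε hε
    obtain ⟨hRsec, PR, Φ, hPRmeas, hΦsm, hΦint, hPRint, hPRcond, hPRio, hΦeq⟩ :=
      goodApprox_of_mem_span (μ := μ) hm s hRspan
    have hmain : eLpNorm (H - Φ) 1 μ ≤ ENNReal.ofReal ε := by
      have hsecae : ∀ᵐ ω ∂μ, Integrable (fun u => h u ω) ν := by
        have := hIh.prod_left_ae
        simpa [Function.uncurry] using this
      have step1 : ∀ᵐ ω ∂μ, (‖(H - Φ) ω‖₊ : ℝ≥0∞) ≤ ∫⁻ u, ‖h u ω - PR u ω‖₊ ∂ν := by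
        filter_upwards [hsecae] with ω hω
        have heq : (H - Φ) ω = ∫ u, (h u ω - PR u ω) ∂ν := by
          have h1 : (H - Φ) ω = H ω - Φ ω := rfl
          rw [h1, hΦeq ω]
          exact (integral_sub hω (hPRio ω)).symm
        rw [heq]
        exact enorm_integral_le_lintegral_enorm _
      have hDmeas : AEMeasurable (fun p : ℝ × Ω => (‖h p.1 p.2 - PR p.1 p.2‖₊ : ℝ≥0∞)) π := by
        have : Measurable (fun p : ℝ × Ω => h p.1 p.2 - PR p.1 p.2) := by
          have h1 : Measurable (fun p : ℝ × Ω => h p.1 p.2) := hhmeas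
          have h2 : Measurable (fun p : ℝ × Ω => PR p.1 p.2) := hPRmeas
          exact h1.sub h2
        exact (this.enorm).aemeasurable
      calc eLpNorm (H - Φ) 1 μ
          = ∫⁻ ω, ‖(H - Φ) ω‖₊ ∂μ := eLpNorm_one_eq_lintegral_enorm
        _ ≤ ∫⁻ ω, (∫⁻ u, ‖h u ω - PR u ω‖₊ ∂ν) ∂μ := lintegral_mono_ae step1
        _ = ∫⁻ u, (∫⁻ ω, ‖h u ω - PR u ω‖₊ ∂μ) ∂ν := by
            refine lintegral_lintegral_swap (μ := μ) (ν := ν) ?_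
            refine hDmeas.comp_quasiMeasurePreserving
              (Measure.measurePreserving_swap (μ := μ) (ν := ν)).quasiMeasurePreserving
        _ ≤ ∫⁻ u, (∫⁻ ω, ‖h u ω - R (u, ω)‖₊ ∂μ) ∂ν := by
            refine lintegral_mono_ae ?_
            filter_upwards [ae_restrict_mem measurableSet_Ioc] with u hu
            calc ∫⁻ ω, (‖h u ω - PR u ω‖₊ : ℝ≥0∞) ∂μ
                = eLpNorm (fun ω => h u ω - PR u ω) 1 μ :=
                  (eLpNorm_one_eq_lintegral_enorm (f := fun ω => h u ω - PR u ω)).symm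
              _ = eLpNorm (μ[(fun ω => h u ω - R (u, ω))|m]) 1 μ := by
                  refine eLpNorm_congr_ae ?_
                  have h1 : (fun ω => h u ω - PR u ω) =ᵐ[μ]
                      fun ω => (μ[h u|m]) ω - (μ[(fun ω => R (u,ω))|m]) ω :=
                    (hfix u hu).sub (hPRcond u)
                  have h2 : μ[(fun ω => h u ω - R (u, ω))|m] =ᵐ[μ]
                      fun ω => (μ[h u|m]) ω - (μ[(fun ω => R (u,ω))|m]) ω := by
                    have h3 : (fun ω => h u ω - R (u, ω))
                        = (h u - fun ω => R (u, ω)) := rfl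
                    rw [h3]
                    exact condExp_sub (hint u) (hRsec u) m
                  exact h1.trans h2.symm
              _ ≤ eLpNorm (fun ω => h u ω - R (u, ω)) 1 μ :=
                  eLpNorm_one_condExp_le_eLpNorm _
              _ = ∫⁻ ω, ‖h u ω - R (u, ω)‖₊ ∂μ := eLpNorm_one_eq_lintegral_enorm
        _ = ∫⁻ p : ℝ × Ω, ‖h p.1 p.2 - R p‖₊ ∂π := by
            exact (lintegral_prod (μ := ν) (ν := μ)
              (fun p : ℝ × Ω => (‖h p.1 p.2 - R p‖₊ : ℝ≥0∞))
              (hhmeas.aemeasurable.sub hRint.aestronglyMeasurable.aemeasurable).enorm).symm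
        _ = eLpNorm (Function.uncurry h - R) 1 π := by
            rw [eLpNorm_one_eq_lintegral_enorm]
            rfl
        _ ≤ ENNReal.ofReal ε := hRapprox
    have hΦfix : μ[Φ|m] = Φ := condExp_of_stronglyMeasurable hm hΦsm hΦint
    have hsecond : eLpNorm (Φ - μ[H|m]) 1 μ ≤ eLpNorm (H - Φ) 1 μ := by
      have h1 : μ[Φ - H|m] =ᵐ[μ] Φ - μ[H|m] := by
        refine (condExp_sub hΦint HInt m).trans ?_
        rw [hΦfix]
      calc eLpNorm (Φ - μ[H|m]) 1 μ = eLpNorm (μ[Φ - H|m]) 1 μ :=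
            (eLpNorm_congr_ae h1).symm
        _ ≤ eLpNorm (Φ - H) 1 μ := eLpNorm_one_condExp_le_eLpNorm _
        _ = eLpNorm (H - Φ) 1 μ := eLpNorm_sub_comm _ _ _ _
    calc eLpNorm (H - μ[H|m]) 1 μ = eLpNorm ((H - Φ) + (Φ - μ[H|m])) 1 μ := by
          rw [sub_add_sub_cancel]
      _ ≤ eLpNorm (H - Φ) 1 μ + eLpNorm (Φ - μ[H|m]) 1 μ :=
          eLpNorm_add_le (HInt.sub hΦint).aestronglyMeasurable
            (hΦint.sub integrable_condExp).aestronglyMeasurable le_rfl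
      _ ≤ ENNReal.ofReal ε + ENNReal.ofReal ε := add_le_add hmain (hsecond.trans hmain)
  have hfin : eLpNorm (H - μ[H|m]) 1 μ ≠ ⊤ :=
    (memLp_one_iff_integrable.mpr (HInt.sub integrable_condExp)).eLpNorm_ne_top
  have hδ0 : eLpNorm (H - μ[H|m]) 1 μ = 0 := by
    by_contra hne
    have hpos : 0 < (eLpNorm (H - μ[H|m]) 1 μ).toReal := ENNReal.toReal_pos hne hfin
    have hkey := key ((eLpNorm (H - μ[H|m]) 1 μ).toReal / 8) (by positivity)
    have hadd : ENNReal.ofReal ((eLpNorm (H - μ[H|m]) 1 μ).toReal / 8)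
        + ENNReal.ofReal ((eLpNorm (H - μ[H|m]) 1 μ).toReal / 8)
        = ENNReal.ofReal ((eLpNorm (H - μ[H|m]) 1 μ).toReal / 4) := by
      rw [← ENNReal.ofReal_add (by positivity) (by positivity)]
      ring_nf
    rw [hadd] at hkey
    have hlt : ENNReal.ofReal ((eLpNorm (H - μ[H|m]) 1 μ).toReal / 4)
        < eLpNorm (H - μ[H|m]) 1 μ := by
      calc ENNReal.ofReal ((eLpNorm (H - μ[H|m]) 1 μ).toReal / 4)
          < ENNReal.ofReal ((eLpNorm (H - μ[H|m]) 1 μ).toReal) :=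
            (ENNReal.ofReal_lt_ofReal_iff hpos).mpr (by linarith)
        _ = eLpNorm (H - μ[H|m]) 1 μ := ENNReal.ofReal_toReal hfin
    exact absurd (hkey.trans_lt hlt) (lt_irrefl _)
  have hae : H - μ[H|m] =ᵐ[μ] 0 :=
    (eLpNorm_eq_zero_iff (HInt.sub integrable_condExp).aestronglyMeasurable one_ne_zero).mp hδ0
  refine ⟨μ[H|m], stronglyMeasurable_condExp, ?_⟩
  filter_upwards [hae] with ω hω
  have h1 : H ω - (μ[H|m]) ω = 0 := hω
  linarith

end Projection

/-- Semimartingale-projection step: if `X_t - ∫₀ᵗ g_s ds` is an `F`-martingale and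
`h s` is a version of `E[g s | G s]`, then `E[X_t | G_t] - ∫₀ᵗ h_s ds` is a `G`-martingale. -/
theorem filter_semimartingale_projection
    {Ω : Type*} [m0 : MeasurableSpace Ω] {μ : Measure Ω} [IsProbabilityMeasure μ]
    (F G : Filtration ℝ m0) (hFG : ∀ t : ℝ, G t ≤ F t)
    (X : ℝ → Ω → ℝ)
    (hXadapted : ∀ t : ℝ, StronglyMeasurable[F t] (X t))
    (hXint : ∀ t : ℝ, Integrable (X t) μ)
    (g : ℝ → Ω → ℝ)
    (hgmeas : Measurable (Function.uncurry g))
    (hgadapted : ∀ s : ℝ, StronglyMeasurable[F s] (g s))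
    (hgint : ∀ t : ℝ, 0 ≤ t → ∫⁻ s in Set.Ioc (0 : ℝ) t, ∫⁻ ω, ‖g s ω‖₊ ∂μ < ⊤)
    (hmart : ∀ s t : ℝ, 0 ≤ s → s ≤ t →
      μ[(fun ω => X t ω - ∫ u in (0 : ℝ)..t, g u ω) | F s]
        =ᵐ[μ] fun ω => X s ω - ∫ u in (0 : ℝ)..s, g u ω)
    (h : ℝ → Ω → ℝ)
    (hhmeas : Measurable (Function.uncurry h))
    (hh : ∀ s : ℝ, h s =ᵐ[μ] μ[g s | G s]) :
    ∀ s t : ℝ, 0 ≤ s → s ≤ t →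
      μ[(fun ω => X t ω - ∫ u in (0 : ℝ)..t, h u ω) | G s]
        =ᵐ[μ] fun ω => (μ[X s | G s]) ω - ∫ u in (0 : ℝ)..s, h u ω := by
  intro s t hs hst
  have ht : (0:ℝ) ≤ t := hs.trans hst
  -- rewrite interval integrals as integrals over `Ioc`
  simp only [intervalIntegral.integral_of_le hs, intervalIntegral.integral_of_le ht]
  -- integrability of the uncurried processes on finite time horizons
  have hIH : ∀ r, 0 ≤ r → Integrable (Function.uncurry h)
      ((volume.restrict (Set.Ioc (0:ℝ) r)).prod μ) := by
    intro r hr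
    refine ⟨hhmeas.aestronglyMeasurable, ?_⟩
    have hfin : ∫⁻ p, ‖Function.uncurry h p‖₊
        ∂((volume.restrict (Set.Ioc (0:ℝ) r)).prod μ) < ⊤ := by
      rw [lintegral_prod (fun p => (‖Function.uncurry h p‖₊ : ℝ≥0∞)) hhmeas.aemeasurable.enorm]
      have hsec : ∀ u : ℝ, ∫⁻ ω, (‖h u ω‖₊ : ℝ≥0∞) ∂μ ≤ ∫⁻ ω, (‖g u ω‖₊ : ℝ≥0∞) ∂μ := by
        intro u
        calc ∫⁻ ω, (‖h u ω‖₊ : ℝ≥0∞) ∂μ = eLpNorm (h u) 1 μ :=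
              (eLpNorm_one_eq_lintegral_enorm (f := h u)).symm
          _ = eLpNorm (μ[g u | G u]) 1 μ := eLpNorm_congr_ae (hh u)
          _ ≤ eLpNorm (g u) 1 μ := eLpNorm_one_condExp_le_eLpNorm _
          _ = ∫⁻ ω, (‖g u ω‖₊ : ℝ≥0∞) ∂μ := eLpNorm_one_eq_lintegral_enorm
      calc ∫⁻ u in Set.Ioc (0:ℝ) r, ∫⁻ ω, ‖Function.uncurry h (u, ω)‖₊ ∂μ
          ≤ ∫⁻ u in Set.Ioc (0:ℝ) r, ∫⁻ ω, ‖g u ω‖₊ ∂μ := lintegral_mono fun u => hsec u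
        _ < ⊤ := hgint r hr
    exact hfin
  have hIG : ∀ r, 0 ≤ r → Integrable (Function.uncurry g)
      ((volume.restrict (Set.Ioc (0:ℝ) r)).prod μ) := by
    intro r hr
    refine ⟨hgmeas.aestronglyMeasurable, ?_⟩
    have hfin : ∫⁻ p, ‖Function.uncurry g p‖₊
        ∂((volume.restrict (Set.Ioc (0:ℝ) r)).prod μ) < ⊤ := by
      rw [lintegral_prod (fun p => (‖Function.uncurry g p‖₊ : ℝ≥0∞)) hgmeas.aemeasurable.enorm]
      exact hgint r hr
    exact hfin
  have hHfunInt : ∀ r, 0 ≤ r → Integrable (fun ω => ∫ u in Set.Ioc (0:ℝ) r, h u ω) μ := by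
    intro r hr
    have := (hIH r hr).integral_prod_right
    simpa [Function.uncurry] using this
  have hGfunInt : ∀ r, 0 ≤ r → Integrable (fun ω => ∫ u in Set.Ioc (0:ℝ) r, g u ω) μ := by
    intro r hr
    have := (hIG r hr).integral_prod_right
    simpa [Function.uncurry] using this
  -- restriction of the product integrability to measurable rectangles `univ ×ˢ A`
  have hrestr : ∀ (k : ℝ → Ω → ℝ) (r : ℝ),
      Integrable (Function.uncurry k) ((volume.restrict (Set.Ioc (0:ℝ) r)).prod μ) →
      ∀ (A : Set Ω), MeasurableSet A →
      Integrable (Function.uncurry k) ((volume.restrict (Set.Ioc (0:ℝ) r)).prod (μ.restrict A)) := by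
    intro k r hk A hA
    have heq : (volume.restrict (Set.Ioc (0:ℝ) r)).prod (μ.restrict A)
        = ((volume.restrict (Set.Ioc (0:ℝ) r)).prod μ).restrict (Set.univ ×ˢ A) := by
      rw [← Measure.prod_restrict, Measure.restrict_univ]
    rw [heq]
    exact hk.integrableOn
  -- Fubini for set integrals
  have hswap : ∀ (k : ℝ → Ω → ℝ) (r : ℝ) (A : Set Ω),
      Integrable (Function.uncurry k) ((volume.restrict (Set.Ioc (0:ℝ) r)).prod (μ.restrict A)) →
      ∫ ω in A, (∫ u in Set.Ioc (0:ℝ) r, k u ω) ∂μ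
        = ∫ u in Set.Ioc (0:ℝ) r, (∫ ω in A, k u ω ∂μ) := by
    intro k r A hk
    exact (integral_integral_swap hk).symm
  have hsecu : ∀ (k : ℝ → Ω → ℝ) (r : ℝ) (A : Set Ω),
      Integrable (Function.uncurry k) ((volume.restrict (Set.Ioc (0:ℝ) r)).prod (μ.restrict A)) →
      IntegrableOn (fun u => ∫ ω in A, k u ω ∂μ) (Set.Ioc (0:ℝ) r) volume := by
    intro k r A hk
    exact hk.integral_prod_left
  -- splitting the time interval
  have hdisj : Disjoint (Set.Ioc (0:ℝ) s) (Set.Ioc s t) := Set.Ioc_disjoint_Ioc_of_le le_rfl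
  have hsplit : ∀ (Fn : ℝ → ℝ), IntegrableOn Fn (Set.Ioc (0:ℝ) t) volume →
      ∫ u in Set.Ioc (0:ℝ) t, Fn u
        = (∫ u in Set.Ioc (0:ℝ) s, Fn u) + ∫ u in Set.Ioc s t, Fn u := by
    intro Fn hFn
    rw [← Set.Ioc_union_Ioc_eq_Ioc hs hst]
    exact setIntegral_union hdisj measurableSet_Ioc
      (hFn.mono_set (Set.Ioc_subset_Ioc_right hst)) (hFn.mono_set (Set.Ioc_subset_Ioc_left hs))
  -- on `(s, t]` the set integrals of `h` and `g` coincide on `G s`-sets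
  have hsec_eq : ∀ (A : Set Ω), MeasurableSet[G s] A →
      (∀ᵐ u ∂(volume.restrict (Set.Ioc s t)), ∫ ω in A, h u ω ∂μ = ∫ ω in A, g u ω ∂μ) := by
    intro A hA
    have hgae : ∀ᵐ u ∂(volume.restrict (Set.Ioc s t)), Integrable (g u) μ := by
      have h1 : ∀ᵐ u ∂(volume.restrict (Set.Ioc (0:ℝ) t)), Integrable (g u) μ := by
        have := (hIG t ht).prod_right_ae
        simpa [Function.uncurry] using this
      exact ae_restrict_of_ae_restrict_of_subset (Set.Ioc_subset_Ioc_left hs) h1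
    filter_upwards [ae_restrict_mem measurableSet_Ioc, hgae] with u hu hgu
    have h1 : ∫ ω in A, h u ω ∂μ = ∫ ω in A, (μ[g u | G u]) ω ∂μ :=
      integral_congr_ae (ae_restrict_of_ae (hh u))
    have h2 : ∫ ω in A, (μ[g u | G u]) ω ∂μ = ∫ ω in A, g u ω ∂μ :=
      setIntegral_condExp (G.le u) hgu ((G.mono hu.1.le) A hA)
    rw [h1, h2]
  -- the main application of the uniqueness of conditional expectation
  refine (ae_eq_condExp_of_forall_setIntegral_eq (G.le s)
    ((hXint t).sub (hHfunInt t ht)) ?_ ?_ ?_).symm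
  · intro A _ _
    exact (integrable_condExp.sub (hHfunInt s hs)).integrableOn
  · intro A hA _
    simp only [Pi.sub_apply]
    have hAmeas : MeasurableSet A := (G.le s) A hA
    have hIHtA := hrestr h t (hIH t ht) A hAmeas
    have hIHsA := hrestr h s (hIH s hs) A hAmeas
    have hIGtA := hrestr g t (hIG t ht) A hAmeas
    have hIGsA := hrestr g s (hIG s hs) A hAmeas
    rw [integral_sub (integrable_condExp.integrableOn) ((hHfunInt s hs).integrableOn),
      integral_sub ((hXint t).integrableOn) ((hHfunInt t ht).integrableOn),
      setIntegral_condExp (G.le s) (hXint s) hA]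
    have eqHt : ∫ ω in A, (∫ u in Set.Ioc (0:ℝ) t, h u ω) ∂μ
        = (∫ ω in A, (∫ u in Set.Ioc (0:ℝ) s, h u ω) ∂μ)
          + ∫ u in Set.Ioc s t, (∫ ω in A, g u ω ∂μ) := by
      rw [hswap h t A hIHtA, hsplit _ (hsecu h t A hIHtA), ← hswap h s A hIHsA]
      congr 1
      exact integral_congr_ae (hsec_eq A hA)
    have eqGt : ∫ ω in A, (∫ u in Set.Ioc (0:ℝ) t, g u ω) ∂μ
        = (∫ ω in A, (∫ u in Set.Ioc (0:ℝ) s, g u ω) ∂μ)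
          + ∫ u in Set.Ioc s t, (∫ ω in A, g u ω ∂μ) := by
      rw [hswap g t A hIGtA, hsplit _ (hsecu g t A hIGtA), ← hswap g s A hIGsA]
    have hmart' := hmart s t hs hst
    simp only [intervalIntegral.integral_of_le hs, intervalIntegral.integral_of_le ht] at hmart'
    have hmartInt : ∫ ω in A, (X t ω - ∫ u in Set.Ioc (0:ℝ) t, g u ω) ∂μ
        = ∫ ω in A, (X s ω - ∫ u in Set.Ioc (0:ℝ) s, g u ω) ∂μ := by
      have hXG : Integrable (fun ω => X t ω - ∫ u in Set.Ioc (0:ℝ) t, g u ω) μ :=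
        (hXint t).sub (hGfunInt t ht)
      rw [← setIntegral_condExp (F.le s) hXG ((hFG s) A hA)]
      exact integral_congr_ae (ae_restrict_of_ae hmart')
    rw [integral_sub ((hXint t).integrableOn) ((hGfunInt t ht).integrableOn),
      integral_sub ((hXint s).integrableOn) ((hGfunInt s hs).integrableOn)] at hmartInt
    linarith [eqHt, eqGt, hmartInt]
  · -- a.e. `G s`-strong measurability of the candidate
    have hB : AEStronglyMeasurable[G s] (fun ω => ∫ u in Set.Ioc (0:ℝ) s, h u ω) μ := by
      refine aestronglyMeasurable'_setIntegral (G.le s) hhmeas ?_ (hIH s hs) ?_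
      · intro u
        exact integrable_condExp.congr (hh u).symm
      · intro u hu
        have hasm : AEStronglyMeasurable[G s] (h u) μ :=
          ⟨μ[g u | G u], stronglyMeasurable_condExp.mono (G.mono hu.2), hh u⟩
        exact (condExp_of_aestronglyMeasurable' (G.le s) hasm
          (integrable_condExp.congr (hh u).symm)).symm
    exact AEStronglyMeasurable.sub
      (StronglyMeasurable.aestronglyMeasurable stronglyMeasurable_condExp) hB
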